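/- For every even integer m ≥ 4 there exist vectors u_1, u_2, u_3 ∈ F_{2^m}² such that for all x_1, x_2, x_3, x_4, x_5, x_6 ∈ F_{2^m}, at least one of u_1, u_2, u_3 does not lie in the F_2-linear span of {(x_j, x_j³) : 1 ≤ j ≤ 6} inside F_{2^m}². (Equivalently, for m ≥ 4 even, the third generalized covering radius satisfies ρ_3(BCH(2,m)) ≥ 7.) -/

import Mathlib

set_option maxRecDepth 100000
set_option maxHeartbeats 1000000
set_option synthInstance.maxHeartbeats 1000000
set_option synthInstance.maxSize 2000
set_option linter.unusedSectionVars false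

namespace RhoBCH

abbrev V3 : Type := Fin 3 → ZMod 2

def dotV (a v : V3) : ZMod 2 := a 0 * v 0 + a 1 * v 1 + a 2 * v 2

lemma dotV_zero_left (v : V3) : dotV 0 v = 0 := by simp [dotV]

lemma dotV_zero_right (a : V3) : dotV a 0 = 0 := by simp [dotV]

lemma dotV_add_left (a b v : V3) : dotV (a + b) v = dotV a v + dotV b v := by
  simp only [dotV, Pi.add_apply]; ring

lemma ne_zero_of_dot_one {a v : V3} (h : dotV a v = 1) : a ≠ 0 := by
  rintro rfl; rw [dotV_zero_left] at h; exact one_ne_zero h.symm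

lemma v_ne_zero_of_dot_one {a v : V3} (h : dotV a v = 1) : v ≠ 0 := by
  rintro rfl; rw [dotV_zero_right] at h; exact one_ne_zero h.symm

lemma V3.add_add_cancel (a h : V3) : a + h + h = a := by
  have : h + h = 0 := by
    funext i
    exact CharTwo.add_self_eq_zero (h i)
  rw [add_assoc, this, add_zero]

lemma V3.eq_of_add_eq_zero {a b : V3} (h : a + b = 0) : a = b := by
  have := congrArg (· + b) h
  simpa [V3.add_add_cancel] using this

/-- The coset `{μ | ⟨μ, v⟩ = 1}` as a finset. -/
def CC (v : V3) : Finset V3 := (Finset.univ : Finset V3).filter (fun μ => dotV μ v = 1)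

/- ### decidable facts about `V3` -/

lemma Fcard4 : ∀ v : V3, v ≠ 0 → (CC v).card = 4 := by decide

lemma Fperp3 : ∀ v : V3, v ≠ 0 →
    ((Finset.univ : Finset V3).filter (fun h => h ≠ 0 ∧ dotV h v = 0)).card = 3 := by decide

lemma Fvcount : ∀ h : V3, h ≠ 0 →
    ((Finset.univ : Finset V3).filter (fun v => v ≠ 0 ∧ dotV h v = 0)).card = 3 := by decide

lemma Fseven : ((Finset.univ : Finset V3).filter (fun v => v ≠ 0)).card = 7 := by decide

lemma Ftwozero : ∀ a b : V3, ∃ v : V3, v ≠ 0 ∧ dotV a v = 0 ∧ dotV b v = 0 := by decide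

lemma Fbasis3 : ∀ a b c : V3,
    (∃ v : V3, v ≠ 0 ∧ dotV a v = 0 ∧ dotV b v = 0 ∧ dotV c v = 0) ∨
    (∃ v : V3, dotV a v = 1 ∧ dotV b v = 0 ∧ dotV c v = 0) := by decide

lemma Fsel : ∀ a b c : V3,
    (∃ v : V3, v ≠ 0 ∧ dotV a v = 0 ∧ dotV b v = 0 ∧ dotV c v = 0) ∨
    ((∃ v : V3, dotV a v = 0 ∧ dotV b v = 1 ∧ dotV c v = 0) ∧
     (∃ v : V3, dotV a v = 0 ∧ dotV b v = 0 ∧ dotV c v = 1)) := by decide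

lemma Fpairavoid : ∀ a b c : V3, a ≠ 0 → b ≠ 0 → a ≠ b → c ≠ 0 → c ≠ a → c ≠ b →
    ∃ v : V3, dotV a v = 1 ∧ dotV b v = 1 ∧ dotV c v = 0 := by decide

lemma Fplane : ∀ h a b : V3, h ≠ 0 → a ≠ 0 → a ≠ h → b ≠ 0 → b ≠ h → b ≠ a → b ≠ a + h →
    ∃ v : V3, v ≠ 0 ∧ dotV a v = 1 ∧ dotV b v = 1 ∧ dotV h v = 0 := by decide

lemma FD3 : ∀ v : V3, v ≠ 0 → ∃ a h₁ h₂ : V3,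
    dotV a v = 1 ∧ dotV h₁ v = 0 ∧ dotV h₂ v = 0 ∧ h₁ ≠ 0 ∧ h₂ ≠ 0 ∧ h₁ ≠ h₂ := by decide

lemma Fquad : ∀ s₁ s₂ m₁ m₂ : V3, s₁ ≠ 0 → s₂ ≠ 0 → m₁ ≠ 0 → m₂ ≠ 0 →
    s₁ ≠ s₂ → s₁ ≠ m₁ → s₁ ≠ m₂ → s₂ ≠ m₁ → s₂ ≠ m₂ → m₁ ≠ m₂ →
    ∃ v : V3, (dotV s₁ v = 1 ∧ dotV s₂ v = 1 ∧ dotV m₁ v = 0 ∧ dotV m₂ v = 0) ∨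
      (dotV s₁ v = 1 ∧ dotV s₂ v = 0 ∧ dotV m₁ v = 0 ∧ dotV m₂ v = 0) ∨
      (dotV s₁ v = 0 ∧ dotV s₂ v = 1 ∧ dotV m₁ v = 0 ∧ dotV m₂ v = 0) := by decide

section FieldPart

variable {K : Type*} [Field K] [CharP K 2]

/-- cast `ZMod 2 →+* K`. -/
noncomputable def φK (K : Type*) [Field K] [CharP K 2] : ZMod 2 →+* K :=
  ZMod.castHom (dvd_refl 2) K

lemma zmod2_cases : ∀ c : ZMod 2, c = 0 ∨ c = 1 := by decide

lemma phi_mul (c : ZMod 2) (z : K) : φK K c * z = if c = 1 then z else 0 := by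
  rcases zmod2_cases c with rfl | rfl
  · simp
  · simp

lemma two_eq_zeroK : (2 : K) = 0 := CharTwo.two_eq_zero

end FieldPart


section Chi

variable {K : Type*} [Field K] [CharP K 2]

lemma cube_ident (A B C : K) :
    A ^ 3 + B ^ 3 + C ^ 3 + (A + B + C) ^ 3 = (A + B) * (A + C) * (B + C) := by
  have h2 : (2 : K) = 0 := two_eq_zeroK
  linear_combination (A ^ 3 + B ^ 3 + C ^ 3 + A ^ 2 * B + A ^ 2 * C + A * B ^ 2 + B ^ 2 * C +
    A * C ^ 2 + B * C ^ 2 + 2 * A * B * C) * h2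

def gg1 : V3 := ![1, 0, 0]
def gg2 : V3 := ![0, 1, 0]

/-- canonical value of `y a + y (a + h)` for `a ∉ {0, h}`. -/
noncomputable def deltaF (y : V3 → K) (h : V3) : K :=
  if h = gg1 then y gg2 + y (gg2 + h) else y gg1 + y (gg1 + h)

lemma ne_add_self {a h : V3} (hh : h ≠ 0) : a ≠ a + h :=
  fun e => hh (left_eq_add.mp e)

lemma CC_eq_quad {v a b h : V3} (hv : v ≠ 0) (hh : h ≠ 0)
    (hda : dotV a v = 1) (hdb : dotV b v = 1) (hdh : dotV h v = 0)
    (hba : b ≠ a) (hbah : b ≠ a + h) :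
    CC v = {a, a + h, b, b + h} := by
  have hmem : ∀ μ : V3, dotV μ v = 1 → μ ∈ CC v := fun μ hμ =>
    Finset.mem_filter.mpr ⟨Finset.mem_univ _, hμ⟩
  have hah : dotV (a + h) v = 1 := by rw [dotV_add_left, hda, hdh, add_zero]
  have hbh : dotV (b + h) v = 1 := by rw [dotV_add_left, hdb, hdh, add_zero]
  have d1 : a ≠ a + h := ne_add_self hh
  have d2 : a ≠ b := hba.symm
  have hhh : h + h = 0 := by funext i; exact CharTwo.add_self_eq_zero _
  have d3 : a ≠ b + h := fun e => hbah (by rw [e, add_assoc, hhh, add_zero])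
  have d4 : a + h ≠ b := fun e => hbah e.symm
  have d5 : a + h ≠ b + h := by
    intro e
    apply d2
    have := congrArg (· + h) e
    simpa [V3.add_add_cancel] using this
  have d6 : b ≠ b + h := ne_add_self hh
  have hcard : ({a, a + h, b, b + h} : Finset V3).card = 4 := by
    rw [Finset.card_insert_of_notMem (by simp only [Finset.mem_insert, Finset.mem_singleton]; push_neg; exact ⟨d1, d2, d3⟩),
      Finset.card_insert_of_notMem (by simp only [Finset.mem_insert, Finset.mem_singleton]; push_neg; exact ⟨d4, d5⟩),
      Finset.card_pair d6]
  have hsub : ({a, a + h, b, b + h} : Finset V3) ⊆ CC v := by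
    intro μ hμ
    simp only [Finset.mem_insert, Finset.mem_singleton] at hμ
    rcases hμ with rfl | rfl | rfl | rfl
    · exact hmem _ hda
    · exact hmem _ hah
    · exact hmem _ hdb
    · exact hmem _ hbh
  exact (Finset.eq_of_subset_of_card_le hsub (by rw [hcard]; exact le_of_eq (Fcard4 v hv))).symm

lemma sum_quad (f : V3 → K) {a b h : V3}
    (d1 : a ≠ a + h) (d2 : a ≠ b) (d3 : a ≠ b + h) (d4 : a + h ≠ b)
    (d5 : a + h ≠ b + h) (d6 : b ≠ b + h) :
    ∑ μ ∈ ({a, a + h, b, b + h} : Finset V3), f μ = f a + f (a + h) + f b + f (b + h) := by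
  rw [Finset.sum_insert (by simp only [Finset.mem_insert, Finset.mem_singleton]; push_neg; exact ⟨d1, d2, d3⟩),
    Finset.sum_insert (by simp only [Finset.mem_insert, Finset.mem_singleton]; push_neg; exact ⟨d4, d5⟩),
    Finset.sum_pair d6]
  ring

lemma D1 (y : V3 → K) (hy0 : ∀ v : V3, v ≠ 0 → (∑ μ ∈ CC v, y μ) = 0)
    {h a b : V3} (hh : h ≠ 0) (ha0 : a ≠ 0) (hah : a ≠ h) (hb0 : b ≠ 0) (hbh : b ≠ h) :
    y a + y (a + h) = y b + y (b + h) := by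
  by_cases hba : b = a
  · rw [hba]
  by_cases hbah : b = a + h
  · rw [hbah, V3.add_add_cancel]; ring
  obtain ⟨v, hv0, hda, hdb, hdh⟩ := Fplane h a b hh ha0 hah hb0 hbh hba hbah
  have hCC := CC_eq_quad hv0 hh hda hdb hdh hba hbah
  have h0 := hy0 v hv0
  rw [hCC] at h0
  have d1 : a ≠ a + h := ne_add_self hh
  have hhh : h + h = 0 := by funext i; exact CharTwo.add_self_eq_zero _
  have d5 : a + h ≠ b + h := by
    intro e
    apply hba
    have e2 := congrArg (· + h) e
    simp only [V3.add_add_cancel] at e2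
    exact e2.symm
  have d3 : a ≠ b + h := fun e => hbah (by rw [e, add_assoc, hhh, add_zero])
  rw [sum_quad y d1 (fun e => hba e.symm) d3 (fun e => hbah e.symm) d5 (ne_add_self hh)] at h0
  have h2 : (2 : K) = 0 := two_eq_zeroK
  linear_combination h0 - (y b + y (b + h)) * h2

lemma D2 (y : V3 → K) (hy0 : ∀ v : V3, v ≠ 0 → (∑ μ ∈ CC v, y μ) = 0)
    {h a : V3} (hh : h ≠ 0) (ha0 : a ≠ 0) (hah : a ≠ h) :
    y a + y (a + h) = deltaF y h := by
  rw [deltaF]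
  split_ifs with hg
  · exact D1 y hy0 hh ha0 hah (by decide) (by rw [hg]; decide)
  · exact D1 y hy0 hh ha0 hah (by decide) (fun e => hg e.symm)

end Chi

section ChiCase

variable {K : Type*} [Field K] [CharP K 2]

theorem chiCase (d : V3 → K)
    (hP : ¬ ∃ z : K, z ^ 3 = ∏ v ∈ Finset.univ.filter (fun v : V3 => v ≠ 0), d v)
    (y : V3 → K)
    (hy : ∀ v : V3, v ≠ 0 → (∑ μ ∈ CC v, y μ) = 0 ∧ (∑ μ ∈ CC v, (y μ) ^ 3) = d v) :
    False := by
  have h2 : (2 : K) = 0 := two_eq_zeroK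
  have hy0 : ∀ v : V3, v ≠ 0 → (∑ μ ∈ CC v, y μ) = 0 := fun v hv => (hy v hv).1
  have key : ∀ v : V3, v ≠ 0 →
      d v = ∏ h ∈ Finset.univ.filter (fun h : V3 => h ≠ 0 ∧ dotV h v = 0), deltaF y h := by
    intro v hv
    obtain ⟨a, h₁, h₂, hda, hd1, hd2, h10, h20, h12⟩ := FD3 v hv
    have hd3 : dotV (h₁ + h₂) v = 0 := by rw [dotV_add_left, hd1, hd2, add_zero]
    have h30 : h₁ + h₂ ≠ 0 := fun e => h12 (V3.eq_of_add_eq_zero e)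
    have h13 : h₁ ≠ h₁ + h₂ := fun e => h20 (left_eq_add.mp e)
    have h23 : h₂ ≠ h₁ + h₂ := fun e => h10 (right_eq_add.mp e)
    have ha0 : a ≠ 0 := ne_zero_of_dot_one hda
    have hane : ∀ h : V3, dotV h v = 0 → a ≠ h := by
      intro h hdh e
      rw [e, hdh] at hda
      exact one_ne_zero hda.symm
    have hah1 : a ≠ h₁ := hane _ hd1
    have hah2 : a ≠ h₂ := hane _ hd2
    have hah3 : a ≠ h₁ + h₂ := hane _ hd3
    -- identify the coset
    have hdb : dotV (a + h₂) v = 1 := by rw [dotV_add_left, hda, hd2, add_zero]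
    have hba : a + h₂ ≠ a := fun e => h20 (left_eq_add.mp e.symm)
    have hbah : a + h₂ ≠ a + h₁ := fun e => h12 (add_left_cancel e).symm
    have hCC := CC_eq_quad hv h10 hda hdb hd1 hba hbah
    -- sums
    have hhh1 : h₁ + h₁ = 0 := by funext i; exact CharTwo.add_self_eq_zero _
    have d1 : a ≠ a + h₁ := ne_add_self h10
    have d2 : a ≠ a + h₂ := ne_add_self h20
    have d3 : a ≠ a + h₂ + h₁ := by
      rw [add_assoc, add_comm h₂ h₁]
      exact ne_add_self h30
    have d4 : a + h₁ ≠ a + h₂ := fun e => h12 (add_left_cancel e)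
    have d5 : a + h₁ ≠ a + h₂ + h₁ := by
      intro e
      have e2 : a + h₁ + h₁ = a + h₂ + h₁ + h₁ := by rw [e]
      rw [V3.add_add_cancel, V3.add_add_cancel] at e2
      exact h20 (left_eq_add.mp e2)
    have d6 : a + h₂ ≠ a + h₂ + h₁ := ne_add_self h10
    have hsum0 := (hy v hv).1
    have hsum3 := (hy v hv).2
    rw [hCC, sum_quad y d1 d2 d3 d4 d5 d6] at hsum0
    rw [hCC, sum_quad (fun μ => (y μ) ^ 3) d1 d2 d3 d4 d5 d6] at hsum3
    set A := y a with hA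
    set B := y (a + h₁) with hB
    set C := y (a + h₂) with hC
    set D := y (a + h₂ + h₁) with hD
    have hDval : D = A + B + C := by linear_combination hsum0 - (A + B + C) * h2
    -- delta values
    have hδ1 : A + B = deltaF y h₁ := D2 y hy0 h10 ha0 hah1
    have hδ2 : A + C = deltaF y h₂ := D2 y hy0 h20 ha0 hah2
    have hδ3 : A + D = deltaF y (h₁ + h₂) := by
      have : a + h₂ + h₁ = a + (h₁ + h₂) := by rw [add_assoc, add_comm h₂ h₁]
      rw [hD, this]
      exact D2 y hy0 h30 ha0 hah3
    have hBC : B + C = deltaF y (h₁ + h₂) := by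
      rw [← hδ3, hDval]; linear_combination -A * h2
    have hdv : d v = deltaF y h₁ * deltaF y h₂ * deltaF y (h₁ + h₂) := by
      rw [← hδ1, ← hδ2, ← hBC, ← hsum3, hDval]
      linear_combination cube_ident A B C
    -- the perp set is {h₁, h₂, h₁ + h₂}
    have hperp : (Finset.univ.filter (fun h : V3 => h ≠ 0 ∧ dotV h v = 0)) =
        {h₁, h₂, h₁ + h₂} := by
      have hsub : ({h₁, h₂, h₁ + h₂} : Finset V3) ⊆
          Finset.univ.filter (fun h : V3 => h ≠ 0 ∧ dotV h v = 0) := by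
        intro μ hμ
        simp only [Finset.mem_insert, Finset.mem_singleton] at hμ
        rcases hμ with rfl | rfl | rfl <;>
          exact Finset.mem_filter.mpr ⟨Finset.mem_univ _, by tauto⟩
      have hcard : ({h₁, h₂, h₁ + h₂} : Finset V3).card = 3 := by
        rw [Finset.card_insert_of_notMem (by
          simp only [Finset.mem_insert, Finset.mem_singleton]; push_neg; exact ⟨h12, h13⟩),
          Finset.card_pair h23]
      exact (Finset.eq_of_subset_of_card_le hsub (by
        rw [hcard]; exact le_of_eq (Fperp3 v hv))).symm
    rw [hperp, Finset.prod_insert (by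
        simp only [Finset.mem_insert, Finset.mem_singleton]; push_neg; exact ⟨h12, h13⟩),
      Finset.prod_pair h23]
    rw [hdv]; ring
  -- global product
  apply hP
  refine ⟨∏ h ∈ Finset.univ.filter (fun h : V3 => h ≠ 0), deltaF y h, ?_⟩
  rw [Finset.prod_congr rfl (fun v hv => key v (Finset.mem_filter.mp hv).2)]
  rw [Finset.prod_comm' (t' := Finset.univ.filter (fun h : V3 => h ≠ 0))
    (s' := fun h => Finset.univ.filter (fun v : V3 => v ≠ 0 ∧ dotV h v = 0))
    (by
      intro v h
      simp only [Finset.mem_filter, Finset.mem_univ, true_and]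
      tauto)]
  have hstep : ∀ h ∈ Finset.univ.filter (fun h : V3 => h ≠ 0),
      (∏ _v ∈ Finset.univ.filter (fun v : V3 => v ≠ 0 ∧ dotV h v = 0), deltaF y h)
        = deltaF y h ^ 3 := by
    intro h hh
    rw [Finset.prod_const, Fvcount h (Finset.mem_filter.mp hh).2]
  rw [Finset.prod_congr rfl hstep, ← Finset.prod_pow]

end ChiCase

section Core

variable {K : Type*} [Field K] [CharP K 2] [DecidableEq K]

/-- fiber count of a label. -/
def nn (lam : Fin 6 → V3) (μ : V3) : ℕ :=
  ((Finset.univ : Finset (Fin 6)).filter (fun j => lam j = μ)).card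

/-- fiber sum. -/
def XX (f : Fin 6 → K) (lam : Fin 6 → V3) (μ : V3) : K :=
  ∑ j ∈ (Finset.univ : Finset (Fin 6)).filter (fun j => lam j = μ), f j

lemma sum_to_bins (x : Fin 6 → K) (lam : Fin 6 → V3) (v : V3) :
    (∑ j, φK K (dotV (lam j) v) * x j) = ∑ μ ∈ CC v, XX x lam μ := by
  rw [CC, Finset.sum_filter]
  rw [← Finset.sum_fiberwise (Finset.univ : Finset (Fin 6)) lam
      (fun j => φK K (dotV (lam j) v) * x j)]
  refine Finset.sum_congr rfl fun μ _ => ?_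
  have hc : ∀ j ∈ Finset.univ.filter (fun j => lam j = μ),
      φK K (dotV (lam j) v) * x j = φK K (dotV μ v) * x j := by
    intro j hj
    rw [(Finset.mem_filter.mp hj).2]
  rw [Finset.sum_congr rfl hc, ← Finset.mul_sum, phi_mul, XX]

lemma XX_zero (f : Fin 6 → K) {lam : Fin 6 → V3} {μ : V3} (h : nn lam μ = 0) :
    XX f lam μ = 0 := by
  rw [XX, Finset.card_eq_zero.mp h, Finset.sum_empty]

lemma XX_cube {x : Fin 6 → K} {lam : Fin 6 → V3} {μ : V3} (h : nn lam μ ≤ 1) :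
    XX (fun j => x j ^ 3) lam μ = (XX x lam μ) ^ 3 := by
  rcases Nat.le_one_iff_eq_zero_or_eq_one.mp h with h0 | h1
  · rw [XX_zero _ h0, XX_zero _ h0]
    simp
  · obtain ⟨j, hj⟩ := Finset.card_eq_one.mp h1
    rw [XX, XX, hj, Finset.sum_singleton, Finset.sum_singleton]

lemma XX_cube_zero {x : Fin 6 → K} {lam : Fin 6 → V3} {μ : V3} (h : nn lam μ ≤ 2)
    (hX : XX x lam μ = 0) : XX (fun j => x j ^ 3) lam μ = 0 := by
  have h2 : (2 : K) = 0 := two_eq_zeroK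
  by_cases h1 : nn lam μ ≤ 1
  · rw [XX_cube h1, hX]
    simp
  · have hc2 : nn lam μ = 2 := by omega
    obtain ⟨j, k, hjk, hs⟩ := Finset.card_eq_two.mp hc2
    rw [XX, hs, Finset.sum_pair hjk] at hX
    rw [XX, hs, Finset.sum_pair hjk]
    have hkj : x k = x j := by linear_combination hX - x j * h2
    rw [hkj]
    linear_combination x j ^ 3 * h2

lemma filterX_le2 (x : Fin 6 → K) (lam : Fin 6 → V3) (v : V3) (hv : v ≠ 0)
    {z₁ z₂ : V3} (hz : z₁ ≠ z₂) (h₁ : z₁ ∈ CC v) (h₂ : z₂ ∈ CC v)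
    (hXz : ∀ μ ∈ CC v, XX x lam μ ≠ 0 → μ ≠ z₁ ∧ μ ≠ z₂) :
    ((CC v).filter (fun μ => XX x lam μ ≠ 0)).card ≤ 2 := by
  have hsub : (CC v).filter (fun μ => XX x lam μ ≠ 0) ⊆ ((CC v).erase z₂).erase z₁ := by
    intro μ hμ
    obtain ⟨hμCC, hXne⟩ := Finset.mem_filter.mp hμ
    obtain ⟨hne1, hne2⟩ := hXz μ hμCC hXne
    exact Finset.mem_erase.mpr ⟨hne1, Finset.mem_erase.mpr ⟨hne2, hμCC⟩⟩
  have e0 := Fcard4 v hv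
  have e2 := Finset.card_erase_of_mem h₂
  have e1 := Finset.card_erase_of_mem (Finset.mem_erase.mpr ⟨hz, h₁⟩)
  have hc := Finset.card_le_card hsub
  omega

theorem core (d : V3 → K) (hd0 : ∀ v : V3, v ≠ 0 → d v ≠ 0)
    (hP : ¬ ∃ z : K, z ^ 3 = ∏ v ∈ Finset.univ.filter (fun v : V3 => v ≠ 0), d v)
    (x : Fin 6 → K) (lam : Fin 6 → V3)
    (hsum : ∀ v : V3, v ≠ 0 →
      (∑ j, φK K (dotV (lam j) v) * x j) = 0 ∧
      (∑ j, φK K (dotV (lam j) v) * x j ^ 3) = d v) : False := by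
  have h2 : (2 : K) = 0 := two_eq_zeroK
  have dCC : ∀ {μ vv : V3}, μ ∈ CC vv → dotV μ vv = 1 :=
    fun {μ vv} hμ => (Finset.mem_filter.mp hμ).2
  have mCC : ∀ {μ vv : V3}, dotV μ vv = 1 → μ ∈ CC vv :=
    fun {μ vv} h => Finset.mem_filter.mpr ⟨Finset.mem_univ _, h⟩
  have CCne0 : ∀ {μ vv : V3}, μ ∈ CC vv → μ ≠ 0 :=
    fun {μ vv} hμ => ne_zero_of_dot_one (dCC hμ)
  have neq_of_dots : ∀ {μ ν vv : V3}, dotV μ vv = 1 → dotV ν vv = 0 → μ ≠ ν := by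
    intro μ ν vv h1 h0 e
    rw [e, h0] at h1
    exact one_ne_zero h1.symm
  have zero_notCC : ∀ {vv : V3}, (0 : V3) ∈ CC vv → False := by
    intro vv h
    have := dCC h
    rw [dotV_zero_left] at this
    exact one_ne_zero this.symm
  have key : ∀ v : V3, v ≠ 0 →
      (∑ μ ∈ CC v, XX x lam μ) = 0 ∧
      (∑ μ ∈ CC v, XX (fun j => x j ^ 3) lam μ) = d v := by
    intro v hv
    exact ⟨by rw [← sum_to_bins x lam v]; exact (hsum v hv).1,
      by rw [← sum_to_bins (fun j => x j ^ 3) lam v]; exact (hsum v hv).2⟩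
  have htot : ∑ μ : V3, nn lam μ = 6 := by
    have hc := Finset.card_eq_sum_card_fiberwise
      (f := lam) (s := Finset.univ) (t := Finset.univ) (fun j _ => Finset.mem_univ _)
    simp only [Finset.card_univ, Fintype.card_fin] at hc
    exact hc.symm
  have hle : ∀ s : Finset V3, (∑ μ ∈ s, nn lam μ) ≤ 6 := by
    intro s
    calc (∑ μ ∈ s, nn lam μ) ≤ ∑ μ : V3, nn lam μ :=
          Finset.sum_le_sum_of_subset s.subset_univ
    _ = 6 := htot
  have bound3 : ∀ a b c : V3, a ≠ b → a ≠ c → b ≠ c →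
      nn lam a + nn lam b + nn lam c ≤ 6 := by
    intro a b c hab hac hbc
    have h := hle {a, b, c}
    rw [Finset.sum_insert (by simp [hab, hac]), Finset.sum_pair hbc] at h
    omega
  have bound4 : ∀ a b c e : V3, a ≠ b → a ≠ c → a ≠ e → b ≠ c → b ≠ e → c ≠ e →
      nn lam a + nn lam b + nn lam c + nn lam e ≤ 6 := by
    intro a b c e hab hac hae hbc hbe hce
    have h := hle {a, b, c, e}
    rw [Finset.sum_insert (by simp [hab, hac, hae]),
      Finset.sum_insert (by simp [hbc, hbe]), Finset.sum_pair hce] at h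
    omega
  have bound5 : ∀ a b c e f : V3, a ≠ b → a ≠ c → a ≠ e → a ≠ f → b ≠ c → b ≠ e →
      b ≠ f → c ≠ e → c ≠ f → e ≠ f →
      nn lam a + nn lam b + nn lam c + nn lam e + nn lam f ≤ 6 := by
    intro a b c e f hab hac hae haf hbc hbe hbf hce hcf hef
    have h := hle {a, b, c, e, f}
    rw [Finset.sum_insert (by simp [hab, hac, hae, haf]),
      Finset.sum_insert (by simp [hbc, hbe, hbf]),
      Finset.sum_insert (by simp [hce, hcf]), Finset.sum_pair hef] at h
    omega
  have hXne_n : ∀ μ : V3, XX x lam μ ≠ 0 → nn lam μ ≠ 0 :=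
    fun μ hX hn => hX (XX_zero x hn)
  -- Tool T2 : a coset meeting the support in at most one bin of size ≤ 2.
  have T2 : ∀ v : V3, v ≠ 0 → ∀ μ₀ : V3, (∀ μ ∈ CC v, μ ≠ μ₀ → nn lam μ = 0) →
      (μ₀ ∈ CC v → nn lam μ₀ ≤ 2) → False := by
    intro v hv μ₀ hothers hn0
    obtain ⟨hX0, hYd⟩ := key v hv
    by_cases hμ₀ : μ₀ ∈ CC v
    · rw [Finset.sum_eq_single_of_mem μ₀ hμ₀
        (fun μ hμ hne => XX_zero x (hothers μ hμ hne))] at hX0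
      rw [Finset.sum_eq_single_of_mem μ₀ hμ₀
        (fun μ hμ hne => XX_zero _ (hothers μ hμ hne))] at hYd
      exact hd0 v hv (by rw [← hYd]; exact XX_cube_zero (hn0 hμ₀) hX0)
    · refine hd0 v hv ?_
      rw [← hYd]
      exact Finset.sum_eq_zero
        (fun μ hμ => XX_zero _ (hothers μ hμ (fun e => hμ₀ (e ▸ hμ))))
  -- Tool T1 : a coset all whose bins are of size ≤ 1 and with at most two nonzero X values.
  have T1 : ∀ v : V3, v ≠ 0 → (∀ μ ∈ CC v, nn lam μ ≤ 1) →
      ((CC v).filter (fun μ => XX x lam μ ≠ 0)).card ≤ 2 → False := by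
    intro v hv hones hsmall
    obtain ⟨hX0, hYd⟩ := key v hv
    have hXA : (∑ μ ∈ (CC v).filter (fun μ => XX x lam μ ≠ 0), XX x lam μ) = 0 := by
      rw [Finset.sum_filter_ne_zero]
      exact hX0
    have hYA : (∑ μ ∈ (CC v).filter (fun μ => XX x lam μ ≠ 0), (XX x lam μ) ^ 3) = d v := by
      have e1 : (∑ μ ∈ CC v, XX (fun j => x j ^ 3) lam μ)
          = ∑ μ ∈ CC v, (XX x lam μ) ^ 3 :=
        Finset.sum_congr rfl (fun μ hμ => XX_cube (hones μ hμ))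
      have e2 : (∑ μ ∈ (CC v).filter (fun μ => XX x lam μ ≠ 0), (XX x lam μ) ^ 3)
          = ∑ μ ∈ CC v, (XX x lam μ) ^ 3 := by
        refine Finset.sum_subset (Finset.filter_subset _ _) ?_
        intro μ hμ hA'
        have hXz : XX x lam μ = 0 := by
          by_contra hne
          exact hA' (Finset.mem_filter.mpr ⟨hμ, hne⟩)
        rw [hXz]
        ring
      rw [e2, ← e1, hYd]
    set A := (CC v).filter (fun μ => XX x lam μ ≠ 0) with hA
    by_cases hc0 : A.card = 0
    · rw [Finset.card_eq_zero.mp hc0, Finset.sum_empty] at hYA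
      exact hd0 v hv hYA.symm
    by_cases hc1 : A.card = 1
    · obtain ⟨a, ha⟩ := Finset.card_eq_one.mp hc1
      rw [ha, Finset.sum_singleton] at hXA
      have haA : a ∈ A := ha ▸ Finset.mem_singleton_self a
      exact (Finset.mem_filter.mp haA).2 hXA
    have hc2 : A.card = 2 := by omega
    obtain ⟨a, b, hab, hA2⟩ := Finset.card_eq_two.mp hc2
    rw [hA2, Finset.sum_pair hab] at hXA hYA
    refine hd0 v hv ?_
    rw [← hYA]
    have hba : XX x lam b = XX x lam a := by linear_combination hXA - XX x lam a * h2
    rw [hba]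
    linear_combination XX x lam a ^ 3 * h2
  ---- Main case analysis ----
  by_cases hM1e : ∃ μ : V3, μ ≠ 0 ∧ 2 ≤ nn lam μ
  case neg =>
    -- no bin of size ≥ 2 : the cubic-character case
    refine chiCase d hP (XX x lam) ?_
    intro v hv
    obtain ⟨hX0, hYd⟩ := key v hv
    refine ⟨hX0, ?_⟩
    rw [← hYd]
    refine Finset.sum_congr rfl (fun μ hμ => ?_)
    have hμle : nn lam μ ≤ 1 := by
      by_contra hgt
      exact hM1e ⟨μ, CCne0 hμ, by omega⟩
    exact (XX_cube hμle).symm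
  case pos =>
  obtain ⟨μ₁, hμ₁0, hμ₁2⟩ := hM1e
  by_cases hM2e : ∃ μ : V3, μ ≠ 0 ∧ μ ≠ μ₁ ∧ 2 ≤ nn lam μ
  case neg =>
    -- exactly one bin of size ≥ 2
    have hother : ∀ μ : V3, μ ≠ 0 → μ ≠ μ₁ → nn lam μ ≤ 1 := by
      intro μ h0 h1
      by_contra hgt
      exact hM2e ⟨μ, h0, h1, by omega⟩
    -- find two empty bins
    have hsplit : ((((Finset.univ : Finset V3).filter (fun μ => μ ≠ 0)).filter
          (fun μ => nn lam μ = 0)).card) +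
        ((((Finset.univ : Finset V3).filter (fun μ => μ ≠ 0)).filter
          (fun μ => ¬ nn lam μ = 0)).card) = 7 := by
      rw [Finset.card_filter_add_card_filter_not]
      exact Fseven
    set Pos := ((Finset.univ : Finset V3).filter (fun μ => μ ≠ 0)).filter
      (fun μ => ¬ nn lam μ = 0) with hPosdef
    have hμ₁Pos : μ₁ ∈ Pos := by
      rw [hPosdef]
      exact Finset.mem_filter.mpr
        ⟨Finset.mem_filter.mpr ⟨Finset.mem_univ _, hμ₁0⟩, by omega⟩
    have hcarde : (Pos.erase μ₁).card = Pos.card - 1 := Finset.card_erase_of_mem hμ₁Pos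
    have hcs : (Pos.erase μ₁).card ≤ ∑ μ ∈ Pos.erase μ₁, nn lam μ := by
      rw [Finset.card_eq_sum_ones]
      refine Finset.sum_le_sum ?_
      intro μ hμ
      have hμPos := Finset.mem_of_mem_erase hμ
      have := (Finset.mem_filter.mp hμPos).2
      omega
    have hsum6 : (∑ μ ∈ Pos.erase μ₁, nn lam μ) + nn lam μ₁ ≤ 6 := by
      rw [Finset.sum_erase_add Pos _ hμ₁Pos]
      exact hle Pos
    have hZ2 : 1 < (((Finset.univ : Finset V3).filter (fun μ => μ ≠ 0)).filter
        (fun μ => nn lam μ = 0)).card := by omega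
    obtain ⟨z₁, hz₁m, z₂, hz₂m, hz₁₂⟩ := Finset.one_lt_card.mp hZ2
    obtain ⟨hz₁NZ, hz₁n⟩ := Finset.mem_filter.mp hz₁m
    obtain ⟨hz₂NZ, hz₂n⟩ := Finset.mem_filter.mp hz₂m
    have hz₁0 : z₁ ≠ 0 := (Finset.mem_filter.mp hz₁NZ).2
    have hz₂0 : z₂ ≠ 0 := (Finset.mem_filter.mp hz₂NZ).2
    have hμz₁ : μ₁ ≠ z₁ := by
      intro e
      rw [e] at hμ₁2
      omega
    have hμz₂ : μ₁ ≠ z₂ := by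
      intro e
      rw [e] at hμ₁2
      omega
    obtain ⟨v, hdz₁, hdz₂, hdμ₁⟩ := Fpairavoid z₁ z₂ μ₁ hz₁0 hz₂0 hz₁₂ hμ₁0 hμz₁ hμz₂
    have hv : v ≠ 0 := v_ne_zero_of_dot_one hdz₁
    refine T1 v hv ?_ ?_
    · intro μ hμ
      exact hother μ (CCne0 hμ) (neq_of_dots (dCC hμ) hdμ₁)
    · refine filterX_le2 x lam v hv hz₁₂ (mCC hdz₁) (mCC hdz₂) ?_
      intro μ _ hXne
      have hn := hXne_n μ hXne
      constructor
      · intro e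
        rw [e] at hn
        exact hn hz₁n
      · intro e
        rw [e] at hn
        exact hn hz₂n
  case pos =>
  obtain ⟨μ₂, hμ₂0, hμ₂μ₁, hμ₂2⟩ := hM2e
  have hμ₁μ₂ : μ₁ ≠ μ₂ := Ne.symm hμ₂μ₁
  by_cases hM3e : ∃ μ : V3, μ ≠ 0 ∧ μ ≠ μ₁ ∧ μ ≠ μ₂ ∧ 2 ≤ nn lam μ
  case pos =>
    -- three bins of size ≥ 2
    obtain ⟨μ₃, hμ₃0, hμ₃μ₁, hμ₃μ₂, hμ₃2⟩ := hM3e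
    have hb := bound3 μ₁ μ₂ μ₃ hμ₁μ₂ (Ne.symm hμ₃μ₁) (Ne.symm hμ₃μ₂)
    have hzero : ∀ μ : V3, μ ≠ 0 → μ ≠ μ₁ → μ ≠ μ₂ → μ ≠ μ₃ → nn lam μ = 0 := by
      intro μ h0 hm1 hm2 hm3
      by_contra hne
      have := bound4 μ μ₁ μ₂ μ₃ hm1 hm2 hm3 hμ₁μ₂ (Ne.symm hμ₃μ₁) (Ne.symm hμ₃μ₂)
      omega
    rcases Fbasis3 μ₁ μ₂ μ₃ with ⟨v, hv0, e1, e2, e3⟩ | ⟨v, e1, e2, e3⟩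
    · refine T2 v hv0 0 ?_ ?_
      · intro μ hμ _
        exact hzero μ (CCne0 hμ) (neq_of_dots (dCC hμ) e1)
          (neq_of_dots (dCC hμ) e2) (neq_of_dots (dCC hμ) e3)
      · intro h0CC
        exact absurd h0CC (fun h => zero_notCC h)
    · have hv0 : v ≠ 0 := v_ne_zero_of_dot_one e1
      refine T2 v hv0 μ₁ ?_ ?_
      · intro μ hμ hne
        exact hzero μ (CCne0 hμ) hne (neq_of_dots (dCC hμ) e2) (neq_of_dots (dCC hμ) e3)
      · intro _
        omega
  case neg =>
    have hother2 : ∀ μ : V3, μ ≠ 0 → μ ≠ μ₁ → μ ≠ μ₂ → nn lam μ ≤ 1 := by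
      intro μ h0 hm1 hm2
      by_contra hgt
      exact hM3e ⟨μ, h0, hm1, hm2, by omega⟩
    by_cases hS2e : ∃ s₁ s₂ : V3, s₁ ≠ 0 ∧ s₂ ≠ 0 ∧ s₁ ≠ s₂ ∧ s₁ ≠ μ₁ ∧ s₁ ≠ μ₂ ∧
        s₂ ≠ μ₁ ∧ s₂ ≠ μ₂ ∧ nn lam s₁ = 1 ∧ nn lam s₂ = 1
    case pos =>
      obtain ⟨s₁, s₂, hs₁0, hs₂0, hs₁₂, hs₁μ₁, hs₁μ₂, hs₂μ₁, hs₂μ₂, hn₁, hn₂⟩ := hS2e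
      have hzero : ∀ μ : V3, μ ≠ 0 → μ ≠ μ₁ → μ ≠ μ₂ → μ ≠ s₁ → μ ≠ s₂ → nn lam μ = 0 := by
        intro μ h0 hm1 hm2 hm3 hm4
        by_contra hne
        have hμle := hother2 μ h0 hm1 hm2
        have := bound5 μ μ₁ μ₂ s₁ s₂ hm1 hm2 hm3 hm4 hμ₁μ₂ (Ne.symm hs₁μ₁)
          (Ne.symm hs₂μ₁) (Ne.symm hs₁μ₂) (Ne.symm hs₂μ₂) hs₁₂
        omega
      obtain ⟨v, hpat⟩ := Fquad s₁ s₂ μ₁ μ₂ hs₁0 hs₂0 hμ₁0 hμ₂0 hs₁₂ hs₁μ₁ hs₁μ₂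
        hs₂μ₁ hs₂μ₂ hμ₁μ₂
      rcases hpat with ⟨e1, e2, f1, f2⟩ | ⟨e1, e2, f1, f2⟩ | ⟨e1, e2, f1, f2⟩
      · have hv0 : v ≠ 0 := v_ne_zero_of_dot_one e1
        refine T1 v hv0 ?_ ?_
        · intro μ hμ
          exact hother2 μ (CCne0 hμ) (neq_of_dots (dCC hμ) f1) (neq_of_dots (dCC hμ) f2)
        · have hsub : (CC v).filter (fun μ => XX x lam μ ≠ 0) ⊆ {s₁, s₂} := by
            intro μ hμ
            obtain ⟨hμCC, hXne⟩ := Finset.mem_filter.mp hμ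
            have hn := hXne_n μ hXne
            simp only [Finset.mem_insert, Finset.mem_singleton]
            by_contra hcon
            push_neg at hcon
            exact hn (hzero μ (CCne0 hμCC) (neq_of_dots (dCC hμCC) f1)
              (neq_of_dots (dCC hμCC) f2) hcon.1 hcon.2)
          calc ((CC v).filter (fun μ => XX x lam μ ≠ 0)).card
              ≤ ({s₁, s₂} : Finset V3).card := Finset.card_le_card hsub
          _ = 2 := Finset.card_pair hs₁₂
      · have hv0 : v ≠ 0 := v_ne_zero_of_dot_one e1
        refine T2 v hv0 s₁ ?_ ?_
        · intro μ hμ hne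
          exact hzero μ (CCne0 hμ) (neq_of_dots (dCC hμ) f1) (neq_of_dots (dCC hμ) f2)
            hne (neq_of_dots (dCC hμ) e2)
        · intro _
          omega
      · have hv0 : v ≠ 0 := v_ne_zero_of_dot_one e2
        refine T2 v hv0 s₂ ?_ ?_
        · intro μ hμ hne
          exact hzero μ (CCne0 hμ) (neq_of_dots (dCC hμ) f1) (neq_of_dots (dCC hμ) f2)
            (neq_of_dots (dCC hμ) e1) hne
        · intro _
          omega
    case neg =>
      by_cases hS1e : ∃ s : V3, s ≠ 0 ∧ s ≠ μ₁ ∧ s ≠ μ₂ ∧ nn lam s = 1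
      case pos =>
        obtain ⟨s, hs0, hsμ₁, hsμ₂, hns⟩ := hS1e
        have hzero : ∀ μ : V3, μ ≠ 0 → μ ≠ μ₁ → μ ≠ μ₂ → μ ≠ s → nn lam μ = 0 := by
          intro μ h0 hm1 hm2 hm3
          by_contra hne
          have hμle := hother2 μ h0 hm1 hm2
          exact hS2e ⟨s, μ, hs0, h0, Ne.symm hm3, hsμ₁, hsμ₂, hm1, hm2, hns, by omega⟩
        have hb := bound3 μ₁ μ₂ s hμ₁μ₂ (Ne.symm hsμ₁) (Ne.symm hsμ₂)
        rcases Fsel s μ₁ μ₂ with ⟨v, hv0, e0, e1, e2⟩ | ⟨⟨v1, f0, f1, f2⟩, ⟨v2, g0, g1, g2⟩⟩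
        · refine T2 v hv0 0 ?_ ?_
          · intro μ hμ _
            exact hzero μ (CCne0 hμ) (neq_of_dots (dCC hμ) e1)
              (neq_of_dots (dCC hμ) e2) (neq_of_dots (dCC hμ) e0)
          · intro h0CC
            exact absurd h0CC (fun h => zero_notCC h)
        · have hn12 : nn lam μ₁ = 2 ∨ nn lam μ₂ = 2 := by omega
          rcases hn12 with hn' | hn'
          · have hv0 : v1 ≠ 0 := v_ne_zero_of_dot_one f1
            refine T2 v1 hv0 μ₁ ?_ ?_
            · intro μ hμ hne
              exact hzero μ (CCne0 hμ) hne (neq_of_dots (dCC hμ) f2)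
                (neq_of_dots (dCC hμ) f0)
            · intro _
              omega
          · have hv0 : v2 ≠ 0 := v_ne_zero_of_dot_one g2
            refine T2 v2 hv0 μ₂ ?_ ?_
            · intro μ hμ hne
              exact hzero μ (CCne0 hμ) (neq_of_dots (dCC hμ) g1) hne
                (neq_of_dots (dCC hμ) g0)
            · intro _
              omega
      case neg =>
        have hzero : ∀ μ : V3, μ ≠ 0 → μ ≠ μ₁ → μ ≠ μ₂ → nn lam μ = 0 := by
          intro μ h0 hm1 hm2
          by_contra hne
          have hμle := hother2 μ h0 hm1 hm2
          exact hS1e ⟨μ, h0, hm1, hm2, by omega⟩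
        obtain ⟨v, hv0, e1, e2⟩ := Ftwozero μ₁ μ₂
        refine T2 v hv0 0 ?_ ?_
        · intro μ hμ _
          exact hzero μ (CCne0 hμ) (neq_of_dots (dCC hμ) e1) (neq_of_dots (dCC hμ) e2)
        · intro h0CC
          exact absurd h0CC (fun h => zero_notCC h)

end Core

lemma V3.ext_zero {v : V3} (h0 : v 0 = 0) (h1 : v 1 = 0) (h2 : v 2 = 0) : v = 0 := by
  funext i
  fin_cases i <;> assumption

lemma card4le {α : Type*} [DecidableEq α] (a b c d : α) :
    ({a, b, c, d} : Finset α).card ≤ 4 := by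
  have h1 := Finset.card_insert_le a ({b, c, d} : Finset α)
  have h2 := Finset.card_insert_le b ({c, d} : Finset α)
  have h3 := Finset.card_insert_le c ({d} : Finset α)
  have h4 : ({d} : Finset α).card = 1 := Finset.card_singleton d
  omega

end RhoBCH

open RhoBCH in
/-- For every even `m ≥ 4` there exist `u₁, u₂, u₃ ∈ F_{2^m}²` such that for all
`x₁, …, x₆ ∈ F_{2^m}`, at least one of `u₁, u₂, u₃` is not in the `F_2`-span of
`{(x_j, x_j³) : 1 ≤ j ≤ 6}`. Equivalently, for even `m ≥ 4`, `ρ₃(BCH(2,m)) ≥ 7`. -/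
theorem rho_three_BCH_two_ge_seven_of_even (m : ℕ) (hm : 4 ≤ m) (hme : Even m) :
    ∃ u₁ u₂ u₃ : GaloisField 2 m × GaloisField 2 m,
      ∀ x₁ x₂ x₃ x₄ x₅ x₆ : GaloisField 2 m,
        u₁ ∉ Submodule.span (ZMod 2)
            ((fun x : GaloisField 2 m => (x, x ^ 3)) '' {x₁, x₂, x₃, x₄, x₅, x₆}) ∨
        u₂ ∉ Submodule.span (ZMod 2)
            ((fun x : GaloisField 2 m => (x, x ^ 3)) '' {x₁, x₂, x₃, x₄, x₅, x₆}) ∨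
        u₃ ∉ Submodule.span (ZMod 2)
            ((fun x : GaloisField 2 m => (x, x ^ 3)) '' {x₁, x₂, x₃, x₄, x₅, x₆}) := by
  classical
  have hm0 : m ≠ 0 := by omega
  have h2K : (2 : GaloisField 2 m) = 0 := two_eq_zeroK
  have addK : ∀ a b : GaloisField 2 m, a + b = 0 → a = b := by
    intro a b h
    linear_combination h - b * h2K
  have hcard : Nat.card (GaloisField 2 m) = 2 ^ m := GaloisField.card 2 m hm0
  -- 3 divides the order of the unit group
  have h2m : (3 : ℕ) ∣ 2 ^ m - 1 := by
    obtain ⟨k, hk⟩ := hme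
    have h4 : (4 : ℕ) ^ k ≡ 1 ^ k [MOD 3] := Nat.ModEq.pow k (by decide)
    have h4' : (4 : ℕ) ^ k ≡ 1 [MOD 3] := by simpa using h4
    have hpow : (2 : ℕ) ^ m = 4 ^ k := by
      rw [hk, ← two_mul, pow_mul]
      norm_num
    rw [hpow]
    have h1le : 1 ≤ (4 : ℕ) ^ k := Nat.one_le_pow _ _ (by norm_num)
    exact (Nat.modEq_iff_dvd' h1le).mp h4'.symm
  have h3div : 3 ∣ Nat.card (GaloisField 2 m)ˣ := by
    rw [Nat.card_units, hcard]
    exact h2m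
  haveI : Fact (Nat.Prime 3) := ⟨by norm_num⟩
  obtain ⟨ω, hω⟩ := exists_prime_orderOf_dvd_card' (G := (GaloisField 2 m)ˣ) 3 h3div
  have hω3 : ω ^ 3 = 1 := by rw [← hω]; exact pow_orderOf_eq_one ω
  have hω1 : ω ≠ 1 := by
    intro h
    rw [h, orderOf_one] at hω
    omega
  -- existence of a non-cube
  have hnoncube : ∃ ζ : GaloisField 2 m, ζ ≠ 0 ∧ ¬∃ z : GaloisField 2 m, z ^ 3 = ζ := by
    by_contra hcon
    push_neg at hcon
    have hsurj : Function.Surjective (fun u : (GaloisField 2 m)ˣ => u ^ 3) := by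
      intro w
      obtain ⟨z, hz⟩ := hcon (w : GaloisField 2 m) (Units.ne_zero w)
      have hz0 : z ≠ 0 := by
        rintro rfl
        rw [zero_pow (by norm_num : 3 ≠ 0)] at hz
        exact Units.ne_zero w hz.symm
      refine ⟨Units.mk0 z hz0, ?_⟩
      apply Units.ext
      rw [Units.val_pow_eq_pow_val, Units.val_mk0]
      exact hz
    have hinj := Finite.injective_iff_surjective.mpr hsurj
    have hcontr : ω = 1 := hinj (by simp [hω3])
    exact hω1 hcontr
  -- two elements independent of 1 over the prime field
  haveI : Fintype (GaloisField 2 m) := Fintype.ofFinite _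
  have hcard16 : 4 < Fintype.card (GaloisField 2 m) := by
    rw [← Nat.card_eq_fintype_card, hcard]
    calc 4 < 2 ^ 4 := by norm_num
    _ ≤ 2 ^ m := Nat.pow_le_pow_right (by norm_num) hm
  have hout : ∀ s : Finset (GaloisField 2 m), s.card ≤ 4 → ∃ z, z ∉ s := by
    intro s hs
    by_contra hcon
    push_neg at hcon
    have hsub : (Finset.univ : Finset (GaloisField 2 m)) ⊆ s := fun z _ => hcon z
    have := Finset.card_le_card hsub
    rw [Finset.card_univ] at this
    omega
  obtain ⟨B₁, hB₁⟩ := hout {0, 1, 0, 1} (card4le _ _ _ _)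
  simp only [Finset.mem_insert, Finset.mem_singleton] at hB₁
  push_neg at hB₁
  have hB₁0 : B₁ ≠ 0 := hB₁.1
  have hB₁1 : B₁ ≠ 1 := hB₁.2.1
  obtain ⟨B₂, hB₂⟩ := hout {0, 1, B₁, 1 + B₁} (card4le _ _ _ _)
  simp only [Finset.mem_insert, Finset.mem_singleton] at hB₂
  push_neg at hB₂
  obtain ⟨hB₂0, hB₂1, hB₂B₁, hB₂s⟩ := hB₂
  -- the base linear map
  set d₀ : V3 → GaloisField 2 m := fun v =>
    φK (GaloisField 2 m) (v 0) * 1 + φK (GaloisField 2 m) (v 1) * B₁ +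
      φK (GaloisField 2 m) (v 2) * B₂ with hd₀def
  have hd00 : ∀ v : V3, v ≠ 0 → d₀ v ≠ 0 := by
    intro v hv
    rcases zmod2_cases (v 0) with e0 | e0 <;> rcases zmod2_cases (v 1) with e1 | e1 <;>
      rcases zmod2_cases (v 2) with e2 | e2 <;>
      simp only [hd₀def, e0, e1, e2, map_zero, map_one, zero_mul, one_mul, add_zero, zero_add]
    · exact absurd (V3.ext_zero e0 e1 e2) hv
    · exact hB₂0
    · exact hB₁0
    · intro h
      exact hB₂B₁ (addK _ _ h).symm
    · exact one_ne_zero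
    · intro h
      exact hB₂1 (addK _ _ h).symm
    · intro h
      exact hB₁1 (addK _ _ h).symm
    · intro h
      rw [add_assoc] at h
      exact hB₂s (addK _ _ (by linear_combination h)).symm
  set NZ := (Finset.univ : Finset V3).filter (fun v => v ≠ 0) with hNZ
  have hP₀ne : (∏ v ∈ NZ, d₀ v) ≠ 0 :=
    Finset.prod_ne_zero_iff.mpr (fun v hv => hd00 v (Finset.mem_filter.mp hv).2)
  obtain ⟨ζ, hζ0, hζnc⟩ := hnoncube
  have hfinal : ∃ t : GaloisField 2 m, t ≠ 0 ∧
      ¬∃ z : GaloisField 2 m, z ^ 3 = ∏ v ∈ NZ, (t * d₀ v) := by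
    by_cases hcube : ∃ z : GaloisField 2 m, z ^ 3 = ∏ v ∈ NZ, d₀ v
    · obtain ⟨z, hz⟩ := hcube
      have hz0 : z ≠ 0 := by
        rintro rfl
        rw [zero_pow (by norm_num : 3 ≠ 0)] at hz
        exact hP₀ne hz.symm
      refine ⟨ζ, hζ0, ?_⟩
      rintro ⟨w, hw⟩
      rw [Finset.prod_mul_distrib, Finset.prod_const] at hw
      have hc7 : NZ.card = 7 := Fseven
      rw [hc7, ← hz] at hw
      apply hζnc
      refine ⟨w * (z * ζ ^ 2)⁻¹, ?_⟩
      have hzζ : z * ζ ^ 2 ≠ 0 := mul_ne_zero hz0 (pow_ne_zero _ hζ0)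
      rw [mul_pow, inv_pow, hw]
      field_simp
    · exact ⟨1, one_ne_zero, by simpa using hcube⟩
  obtain ⟨t, ht0, hPnc⟩ := hfinal
  set d : V3 → GaloisField 2 m := fun v => t * d₀ v with hddef
  have hd0 : ∀ v : V3, v ≠ 0 → d v ≠ 0 := fun v hv => mul_ne_zero ht0 (hd00 v hv)
  -- the three target vectors
  refine ⟨(0, d ![1, 0, 0]), (0, d ![0, 1, 0]), (0, d ![0, 0, 1]), ?_⟩
  intro x₁ x₂ x₃ x₄ x₅ x₆
  by_contra hcon
  push_neg at hcon
  obtain ⟨hmem1, hmem2, hmem3⟩ := hcon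
  set xv : Fin 6 → GaloisField 2 m := ![x₁, x₂, x₃, x₄, x₅, x₆] with hxv
  have himg : ((fun x : GaloisField 2 m => (x, x ^ 3)) '' {x₁, x₂, x₃, x₄, x₅, x₆}) ⊆
      Set.range (fun j : Fin 6 => (xv j, xv j ^ 3)) := by
    rintro p ⟨tt, htt, rfl⟩
    simp only [Set.mem_insert_iff, Set.mem_singleton_iff] at htt
    rcases htt with rfl | rfl | rfl | rfl | rfl | rfl
    · exact ⟨0, rfl⟩
    · exact ⟨1, rfl⟩
    · exact ⟨2, rfl⟩
    · exact ⟨3, rfl⟩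
    · exact ⟨4, rfl⟩
    · exact ⟨5, rfl⟩
  have halg : (algebraMap (ZMod 2) (GaloisField 2 m)) = φK (GaloisField 2 m) :=
    RingHom.ext_zmod _ _
  have hsmul : ∀ (c : ZMod 2) (z : GaloisField 2 m), c • z = φK (GaloisField 2 m) c * z := by
    intro c z
    rw [Algebra.smul_def, halg]
  have getc : ∀ u : GaloisField 2 m × GaloisField 2 m,
      u ∈ Submodule.span (ZMod 2)
        ((fun x : GaloisField 2 m => (x, x ^ 3)) '' {x₁, x₂, x₃, x₄, x₅, x₆}) →
      ∃ c : Fin 6 → ZMod 2,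
        (∑ j, φK (GaloisField 2 m) (c j) * xv j) = u.1 ∧
        (∑ j, φK (GaloisField 2 m) (c j) * xv j ^ 3) = u.2 := by
    intro u hu
    have hu' : u ∈ Submodule.span (ZMod 2)
        (Set.range (fun j : Fin 6 => (xv j, xv j ^ 3))) :=
      Submodule.span_mono himg hu
    rw [Submodule.mem_span_range_iff_exists_fun] at hu'
    obtain ⟨c, hc⟩ := hu'
    refine ⟨c, ?_, ?_⟩
    · have h1 := congrArg Prod.fst hc
      rw [Prod.fst_sum] at h1
      simp only [Prod.smul_fst] at h1
      rw [← h1]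
      exact Finset.sum_congr rfl fun j _ => (hsmul (c j) (xv j)).symm
    · have h1 := congrArg Prod.snd hc
      rw [Prod.snd_sum] at h1
      simp only [Prod.smul_snd] at h1
      rw [← h1]
      exact Finset.sum_congr rfl fun j _ => (hsmul (c j) (xv j ^ 3)).symm
  obtain ⟨c₁, hc₁x, hc₁y⟩ := getc _ hmem1
  obtain ⟨c₂, hc₂x, hc₂y⟩ := getc _ hmem2
  obtain ⟨c₃, hc₃x, hc₃y⟩ := getc _ hmem3
  set lam : Fin 6 → V3 := fun j => ![c₁ j, c₂ j, c₃ j] with hlam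
  refine RhoBCH.core d hd0 ?_ xv lam ?_
  · rw [← hNZ]
    intro ⟨z, hz⟩
    exact hPnc ⟨z, by rw [hz]⟩
  · intro v hv
    have hdot : ∀ j, φK (GaloisField 2 m) (dotV (lam j) v) =
        φK (GaloisField 2 m) (c₁ j) * φK (GaloisField 2 m) (v 0) +
        φK (GaloisField 2 m) (c₂ j) * φK (GaloisField 2 m) (v 1) +
        φK (GaloisField 2 m) (c₃ j) * φK (GaloisField 2 m) (v 2) := by
      intro j
      rw [hlam]
      show φK (GaloisField 2 m) (dotV ![c₁ j, c₂ j, c₃ j] v) = _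
      rw [dotV]
      rw [map_add, map_add, map_mul, map_mul, map_mul]
      rfl
    constructor
    · calc (∑ j, φK (GaloisField 2 m) (dotV (lam j) v) * xv j)
          = ∑ j, (φK (GaloisField 2 m) (v 0) * (φK (GaloisField 2 m) (c₁ j) * xv j) +
              φK (GaloisField 2 m) (v 1) * (φK (GaloisField 2 m) (c₂ j) * xv j) +
              φK (GaloisField 2 m) (v 2) * (φK (GaloisField 2 m) (c₃ j) * xv j)) := by
            refine Finset.sum_congr rfl fun j _ => ?_
            rw [hdot j]
            ring
      _ = φK (GaloisField 2 m) (v 0) * (∑ j, φK (GaloisField 2 m) (c₁ j) * xv j) +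
            φK (GaloisField 2 m) (v 1) * (∑ j, φK (GaloisField 2 m) (c₂ j) * xv j) +
            φK (GaloisField 2 m) (v 2) * (∑ j, φK (GaloisField 2 m) (c₃ j) * xv j) := by
            rw [Finset.sum_add_distrib, Finset.sum_add_distrib,
              Finset.mul_sum, Finset.mul_sum, Finset.mul_sum]
      _ = 0 := by rw [hc₁x, hc₂x, hc₃x]; ring
    · calc (∑ j, φK (GaloisField 2 m) (dotV (lam j) v) * xv j ^ 3)
          = ∑ j, (φK (GaloisField 2 m) (v 0) * (φK (GaloisField 2 m) (c₁ j) * xv j ^ 3) +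
              φK (GaloisField 2 m) (v 1) * (φK (GaloisField 2 m) (c₂ j) * xv j ^ 3) +
              φK (GaloisField 2 m) (v 2) * (φK (GaloisField 2 m) (c₃ j) * xv j ^ 3)) := by
            refine Finset.sum_congr rfl fun j _ => ?_
            rw [hdot j]
            ring
      _ = φK (GaloisField 2 m) (v 0) * (∑ j, φK (GaloisField 2 m) (c₁ j) * xv j ^ 3) +
            φK (GaloisField 2 m) (v 1) * (∑ j, φK (GaloisField 2 m) (c₂ j) * xv j ^ 3) +
            φK (GaloisField 2 m) (v 2) * (∑ j, φK (GaloisField 2 m) (c₃ j) * xv j ^ 3) := by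
            rw [Finset.sum_add_distrib, Finset.sum_add_distrib,
              Finset.mul_sum, Finset.mul_sum, Finset.mul_sum]
      _ = d v := by
            rw [hc₁y, hc₂y, hc₃y]
            show φK (GaloisField 2 m) (v 0) * d ![1, 0, 0] +
              φK (GaloisField 2 m) (v 1) * d ![0, 1, 0] +
              φK (GaloisField 2 m) (v 2) * d ![0, 0, 1] = d v
            rw [hddef]
            simp only [hd₀def]
            show φK (GaloisField 2 m) (v 0) *
                (t * (φK (GaloisField 2 m) 1 * 1 + φK (GaloisField 2 m) 0 * B₁ +
                  φK (GaloisField 2 m) 0 * B₂)) + _ * (t * (φK (GaloisField 2 m) 0 * 1 +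
                  φK (GaloisField 2 m) 1 * B₁ + φK (GaloisField 2 m) 0 * B₂)) +
                _ * (t * (φK (GaloisField 2 m) 0 * 1 + φK (GaloisField 2 m) 0 * B₁ +
                  φK (GaloisField 2 m) 1 * B₂)) = _
            rw [map_zero, map_one]
            ring
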